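/- Let w_1,...,w_N ∈ ℝ^N be vectors and S a subset of {1,...,N} with |S| ≤ t, where for any linear combination w = Σ_{i∈S} β_i w_{s_i} with coordinates (w₁,...,w_N), one has w₁² / (w₂² + ... + w_N²) ≤ SNR_S whenever the denominator is nonzero (with the convention SNR_S = ∞ if e₁ lies in the span). If e₁ = (1,0,...,0) does not lie in span{w_i : i ∈ S}, then there exists a nonzero vector λ ∈ ℝ^N orthogonal to all w_i, i ∈ S, such that λ₁²/‖λ‖² ≥ 1/(1 + SNR_S). -/

import Mathlib

/-- Null-vector lemma: if every vector `v` in the span of `{w i : i ∈ S}` satisfies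
`(v 0)² ≤ SNR_S · Σ_{j ≠ 0} (v j)²`, and the first standard basis vector is not in the
span, then there is a nonzero `λ` orthogonal to all `w i`, `i ∈ S`, with
`λ₀²/‖λ‖² ≥ 1/(1 + SNR_S)`. -/
theorem stmt_4 {N t : ℕ} [NeZero N] (w : Fin N → Fin N → ℝ) (S : Finset (Fin N))
    (hS : S.card ≤ t) (snr : ℝ) (hsnr : 0 ≤ snr)
    (hbound : ∀ v ∈ Submodule.span ℝ (w '' ↑S),
      (v 0) ^ 2 ≤ snr * ∑ j ∈ Finset.univ.erase 0, (v j) ^ 2)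
    (he₁ : (Pi.single 0 1 : Fin N → ℝ) ∉ Submodule.span ℝ (w '' ↑S)) :
    ∃ lam : Fin N → ℝ, lam ≠ 0 ∧ (∀ i ∈ S, ∑ j, lam j * w i j = 0) ∧
      1 / (1 + snr) ≤ (lam 0) ^ 2 / (∑ j, (lam j) ^ 2) := by
  classical
  let K : Submodule ℝ (EuclideanSpace ℝ (Fin N)) :=
    (Submodule.span ℝ (w '' ↑S)).comap (WithLp.linearEquiv 2 ℝ (Fin N → ℝ)).toLinearMap
  haveI : FiniteDimensional ℝ K :=
    inferInstance
  let e₁ : EuclideanSpace ℝ (Fin N) := WithLp.toLp 2 (Pi.single 0 1)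
  let v : EuclideanSpace ℝ (Fin N) := (K.orthogonalProjectionOnto e₁ : EuclideanSpace ℝ (Fin N))
  have hvK : v ∈ K := (K.orthogonalProjectionOnto e₁).2
  let lam : EuclideanSpace ℝ (Fin N) := e₁ - v
  have hlamO : lam ∈ Kᗮ := Submodule.sub_starProjection_mem_orthogonal (K := K) e₁
  have hlam_ne : lam ≠ 0 := by
    intro h
    apply he₁
    have heq : e₁ = v := sub_eq_zero.mp h
    have : e₁ ∈ K := heq ▸ hvK
    exact Submodule.mem_comap.mp this
  have hinner_v : ∑ j, lam j * v j = 0 := by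
    have := hlamO v hvK
    rw [PiLp.inner_apply] at this
    simpa [mul_comm] using this
  have hlam_coord : ∀ j : Fin N, j ≠ 0 → lam j = - v j := by
    intro j hj
    simp [lam, e₁, Pi.single_eq_of_ne hj, hj]
  have hv0 : v 0 = 1 - lam 0 := by
    have : lam 0 = 1 - v 0 := by simp [lam, e₁]
    linarith
  have hsum : ∑ j, lam j ^ 2 = lam 0 := by
    have : ∑ j, lam j ^ 2 = ∑ j, lam j * e₁ j - ∑ j, lam j * v j := by
      rw [← Finset.sum_sub_distrib]
      congr 1; ext j; simp [lam]; ring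
    rw [this, hinner_v, sub_zero]
    rw [Finset.sum_eq_single 0]
    · simp [e₁]
    · intro b _ hb; simp [e₁, Pi.single_eq_of_ne hb]
    · simp
  set s : ℝ := ∑ j ∈ Finset.univ.erase 0, (v j) ^ 2 with hs_def
  have hs_nonneg : 0 ≤ s := Finset.sum_nonneg fun _ _ => sq_nonneg _
  have herase : ∑ j ∈ Finset.univ.erase 0, lam j ^ 2 = s := by
    rw [hs_def]
    apply Finset.sum_congr rfl
    intro j hj
    rw [hlam_coord j (Finset.ne_of_mem_erase hj)]
    ring
  have h1 : lam 0 = lam 0 ^ 2 + s := by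
    conv_lhs => rw [← hsum]
    rw [← Finset.sum_erase_add _ _ (Finset.mem_univ (0 : Fin N)), herase]
    ring
  have h2 : (1 - lam 0) ^ 2 ≤ snr * s := by
    have := hbound (WithLp.ofLp v) (Submodule.mem_comap.mp hvK)
    rwa [hv0] at this
  have h3 : 0 < lam 0 := by
    rcases lt_or_eq_of_le (by positivity : (0:ℝ) ≤ ∑ j, lam j ^ 2) with h | h
    · rw [hsum] at h; exact h
    · exfalso
      apply hlam_ne
      ext j
      have : lam j ^ 2 = 0 := by
        have := (Finset.sum_eq_zero_iff_of_nonneg (fun i _ => sq_nonneg (lam i))).mp h.symm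
        exact this j (Finset.mem_univ j)
      have := pow_eq_zero_iff (n := 2) (by norm_num) |>.mp this
      simpa using this
  refine ⟨WithLp.ofLp lam, (WithLp.ofLp_eq_zero (p := 2)).not.mpr hlam_ne, ?_, ?_⟩
  · intro i hi
    have hwK : (WithLp.toLp 2 (w i) : EuclideanSpace ℝ (Fin N)) ∈ K :=
      Submodule.mem_comap.mpr (Submodule.subset_span ⟨i, hi, rfl⟩)
    have := hlamO (WithLp.toLp 2 (w i)) hwK
    rw [PiLp.inner_apply] at this
    simpa [mul_comm] using this
  · have hle1 : lam 0 ≤ 1 := by nlinarith [h1, hs_nonneg, h3]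
    have h2' : (1 - lam 0) ^ 2 ≤ snr * (lam 0 - lam 0 ^ 2) := by
      rw [show lam 0 - lam 0 ^ 2 = s by linarith]; exact h2
    have hkey : 1 ≤ lam 0 * (1 + snr) := by
      rcases eq_or_lt_of_le hle1 with h | h
      · nlinarith
      · have hu : 0 < 1 - lam 0 := by linarith
        have hstep : 1 - lam 0 ≤ snr * lam 0 := by nlinarith [h2', hu]
        linarith
    rw [hsum, div_le_div_iff₀ (by linarith) h3]
    nlinarith [hkey, h3]
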